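/- For u = (u_1,…,u_n) ∈ ℝⁿ set D(u) = Σ_{k=1}^n e^{−u_k}, and for i ≠ j define γ_ij(u) = e^{−(u_i + u_j)/2} / D(u). Then these functions satisfy the Darboux–Egorov equations: ∂γ_ij/∂u_k = γ_ik·γ_kj for pairwise distinct i, j, k, and Σ_{k=1}^n ∂γ_ij/∂u_k = 0 for all i ≠ j. -/

import Mathlib

/-- With `D(u) = ∑ₖ e^{-uₖ}` and, for `i ≠ j`,
`γ_ij(u) = e^{-(uᵢ+uⱼ)/2} / D(u)`, the Darboux–Egorov equations hold:
`∂γ_ij/∂uₖ = γ_ik γ_kj` for pairwise distinct `i, j, k`, and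
`∑ₖ ∂γ_ij/∂uₖ = 0` for all `i ≠ j`. -/
theorem stmt14 {n : ℕ} (γ : (Fin n → ℝ) → Fin n → Fin n → ℝ)
    (hγ : ∀ u : Fin n → ℝ, ∀ i j : Fin n, i ≠ j →
      γ u i j = Real.exp (-(u i + u j) / 2) / ∑ k, Real.exp (-u k)) :
    ∀ u : Fin n → ℝ, ∀ i j : Fin n, i ≠ j →
      ∃ D : Fin n → ℝ,
        (∀ k : Fin n,
          HasDerivAt (fun t : ℝ => γ (Function.update u k t) i j) (D k) (u k)) ∧
        (∀ k : Fin n, k ≠ i → k ≠ j → D k = γ u i k * γ u k j) ∧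
        ∑ k, D k = 0 := by
  intro u i j hij
  set S : ℝ := ∑ l, Real.exp (-u l) with hS
  set N : ℝ := Real.exp (-(u i + u j) / 2) with hN
  have hSpos : 0 < S := by
    have : (0:ℝ) < Real.exp (-u i) := Real.exp_pos _
    refine Finset.sum_pos (fun l _ => Real.exp_pos _) ⟨i, Finset.mem_univ i⟩
  have hSne : S ≠ 0 := ne_of_gt hSpos
  refine ⟨fun k => (N * Real.exp (-u k) - (if k = i then N * S / 2 else 0)
      - (if k = j then N * S / 2 else 0)) / S ^ 2, ?_, ?_, ?_⟩
  · intro k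
    -- abbreviation for the erased sum
    set C : ℝ := ∑ l ∈ Finset.univ.erase k, Real.exp (-u l) with hC
    have hCpos : ∀ t : ℝ, 0 < Real.exp (-t) + C := by
      intro t
      have : 0 ≤ C := Finset.sum_nonneg fun l _ => (Real.exp_pos _).le
      linarith [Real.exp_pos (-t)]
    have hsum : ∀ t : ℝ, ∑ l, Real.exp (-(Function.update u k t l))
        = Real.exp (-t) + C := by
      intro t
      have h1 : (fun l => Real.exp (-(Function.update u k t l)))
          = Function.update (fun l => Real.exp (-u l)) k (Real.exp (-t)) := by
        funext l
        by_cases h : l = k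
        · subst h; simp
        · simp [Function.update_of_ne h]
      rw [h1, Finset.sum_update_of_mem (Finset.mem_univ k)]
      simp [hC, Finset.sdiff_singleton_eq_erase]
    have hSC : Real.exp (-u k) + C = S := by
      rw [hS, ← Finset.add_sum_erase _ _ (Finset.mem_univ k)]
    have hd : HasDerivAt (fun t : ℝ => Real.exp (-t) + C) (-Real.exp (-u k)) (u k) := by
      have h1 : HasDerivAt (fun t : ℝ => -t) (-1) (u k) := (hasDerivAt_id (u k)).neg
      have := (Real.hasDerivAt_exp (-u k)).comp (u k) h1
      simpa [mul_comm] using this.add_const C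
    have hfun : (fun t : ℝ => γ (Function.update u k t) i j)
        = fun t : ℝ => Real.exp (-(Function.update u k t i + Function.update u k t j) / 2)
            / (Real.exp (-t) + C) := by
      funext t
      rw [hγ _ i j hij, hsum t]
    rw [hfun]
    by_cases hki : k = i
    · subst hki
      have hkj : k ≠ j := hij
      have hupd : ∀ t : ℝ, Function.update u k t k = t := fun t => Function.update_self ..
      have hupdj : ∀ t : ℝ, Function.update u k t j = u j := fun t =>
        Function.update_of_ne (Ne.symm hkj) _ _
      simp only [hupd, hupdj]
      have hn : HasDerivAt (fun t : ℝ => Real.exp (-(t + u j) / 2)) (N * (-1/2)) (u k) := by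
        have h1 : HasDerivAt (fun t : ℝ => -(t + u j) / 2) (-1/2) (u k) := by
          simpa using (((hasDerivAt_id (u k)).add_const (u j)).neg.div_const 2)
        simpa [hN, Function.comp_def] using (Real.hasDerivAt_exp _).comp (u k) h1
      have := hn.div hd (ne_of_gt (hCpos (u k)))
      convert this using 1
      · rfl
      · rfl
      · rfl
      have hnum : Real.exp (-(u k + u j) / 2) = N := rfl
      simp only [if_pos rfl, if_neg hkj, hnum, ← hSC, ↓reduceIte]
      field_simp
      ring
    · by_cases hkj : k = j
      · subst hkj
        have hupd : ∀ t : ℝ, Function.update u k t k = t := fun t => Function.update_self ..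
        have hupdi : ∀ t : ℝ, Function.update u k t i = u i := fun t =>
          Function.update_of_ne (Ne.symm hki) _ _
        simp only [hupd, hupdi]
        have hn : HasDerivAt (fun t : ℝ => Real.exp (-(u i + t) / 2)) (N * (-1/2)) (u k) := by
          have h1 : HasDerivAt (fun t : ℝ => -(u i + t) / 2) (-1/2) (u k) := by
            simpa using (((hasDerivAt_id (u k)).const_add (u i)).neg.div_const 2)
          simpa [hN, Function.comp_def] using (Real.hasDerivAt_exp _).comp (u k) h1
        have := hn.div hd (ne_of_gt (hCpos (u k)))
        convert this using 1
        · rfl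
        · rfl
        · rfl
        simp only [if_neg hki, if_pos rfl, ← hN, ← hSC, ↓reduceIte]
        field_simp
        ring
      · have hupdi : ∀ t : ℝ, Function.update u k t i = u i := fun t =>
          Function.update_of_ne (Ne.symm hki) _ _
        have hupdj : ∀ t : ℝ, Function.update u k t j = u j := fun t =>
          Function.update_of_ne (Ne.symm hkj) _ _
        simp only [hupdi, hupdj]
        have := (hasDerivAt_const (u k) N).div hd (ne_of_gt (hCpos (u k)))
        convert this using 1
        · rfl
        · rfl
        · rfl
        simp only [if_neg hki, if_neg hkj, ← hSC, hN]
        field_simp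
        ring
  · intro k hki hkj
    rw [hγ u i k (Ne.symm hki), hγ u k j hkj]
    have hexp : Real.exp (-(u i + u k) / 2) * Real.exp (-(u k + u j) / 2)
        = N * Real.exp (-u k) := by
      rw [hN, ← Real.exp_add, ← Real.exp_add]; congr 1; ring
    simp only [if_neg hki, if_neg hkj, sub_zero, ← hS]
    rw [div_mul_div_comm, hexp, sq]
  · show (∑ k, ((N * Real.exp (-u k) - (if k = i then N * S / 2 else 0)
        - (if k = j then N * S / 2 else 0)) / S ^ 2)) = 0
    have h1 : ∑ k, (N * Real.exp (-u k) - (if k = i then N * S / 2 else 0)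
        - (if k = j then N * S / 2 else 0))
        = N * S - N * S / 2 - N * S / 2 := by
      rw [Finset.sum_sub_distrib, Finset.sum_sub_distrib, ← Finset.mul_sum, ← hS,
        Finset.sum_ite_eq' Finset.univ i, Finset.sum_ite_eq' Finset.univ j]
      simp
    rw [← Finset.sum_div, h1]
    ring
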